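/- Let C be a 10-element subset of the unit sphere S³ ⊆ ℝ⁴ such that any two distinct points of C have inner product at most 1/6. Then the number of ordered pairs (c, c') of distinct points of C with ⟨c, c'⟩ = −2/3 equals 30, and the number of ordered pairs with ⟨c, c'⟩ = 1/6 equals 60. -/

import Mathlib

open scoped RealInnerProductSpace
open Finset Matrix

namespace PetersenAux

noncomputable def B (x : Fin 10 → EuclideanSpace ℝ (Fin 4)) : Matrix (Fin 10) (Fin 10) ℝ :=
  Matrix.of fun i j => (if i = j then (1:ℝ) else 0) + 1/5 - 6/5 * ⟪x i, x j⟫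

variable {x : Fin 10 → EuclideanSpace ℝ (Fin 4)}

lemma B_apply (i j : Fin 10) :
    B x i j = (if i = j then (1:ℝ) else 0) + 1/5 - 6/5 * ⟪x i, x j⟫ := rfl

lemma B_symm (i j : Fin 10) : B x i j = B x j i := by
  rcases eq_or_ne i j with rfl | h
  · rfl
  · simp only [B_apply, if_neg h, if_neg (Ne.symm h), real_inner_comm]

lemma B_herm : (B x).IsHermitian := by
  ext i j
  simp only [conjTranspose_apply, star_trivial]
  exact B_symm j i

lemma inner_self_one (hx1 : ∀ i, ‖x i‖ = 1) (i : Fin 10) : ⟪x i, x i⟫ = 1 := by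
  rw [real_inner_self_eq_norm_sq, hx1 i, one_pow]

lemma B_diag (hx1 : ∀ i, ‖x i‖ = 1) (i : Fin 10) : B x i i = 0 := by
  rw [B_apply, if_pos rfl, inner_self_one hx1]; ring

lemma B_nonneg (hx1 : ∀ i, ‖x i‖ = 1)
    (hxt : ∀ i j, i ≠ j → ⟪x i, x j⟫ ≤ (1/6:ℝ)) (i j : Fin 10) : 0 ≤ B x i j := by
  rcases eq_or_ne i j with rfl | h
  · rw [B_diag hx1]
  · have := hxt i j h
    rw [B_apply, if_neg h]
    linarith

lemma B_mulVec (z : Fin 10 → ℝ) (i : Fin 10) :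
    (B x *ᵥ z) i = z i + (∑ j, z j)/5 - 6/5 * ⟪x i, ∑ j, z j • x j⟫ := by
  have hpt : ∀ j ∈ univ, ((if i = j then (1:ℝ) else 0) + 1/5 - 6/5 * ⟪x i, x j⟫) * z j
      = (if i = j then z j else 0) + z j/5 - 6/5 * (z j * ⟪x i, x j⟫) := by
    intro j _
    rcases eq_or_ne i j with rfl | h
    · rw [if_pos rfl, if_pos rfl]; ring
    · rw [if_neg h, if_neg h]; ring
  simp only [mulVec, dotProduct, B_apply]
  rw [Finset.sum_congr rfl hpt, Finset.sum_sub_distrib, Finset.sum_add_distrib,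
    Finset.sum_ite_eq, if_pos (Finset.mem_univ i), ← Finset.sum_div, ← Finset.mul_sum]
  congr 1
  rw [inner_sum]
  simp only [real_inner_smul_right]

lemma quadform (z : Fin 10 → ℝ) :
    z ⬝ᵥ (B x *ᵥ z) = (∑ i, z i ^ 2) + (∑ i, z i)^2/5 - 6/5 * ‖∑ j, z j • x j‖^2 := by
  set w := ∑ j, z j • x j with hw
  have key : ∀ i ∈ univ, z i * (B x *ᵥ z) i
      = z i ^ 2 + z i * ((∑ j, z j)/5) - 6/5 * (z i * ⟪x i, w⟫) := by
    intro i _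
    rw [B_mulVec, ← hw]; ring
  have hnorm : ‖w‖^2 = ∑ i, z i * ⟪x i, w⟫ := by
    rw [← real_inner_self_eq_norm_sq, hw, sum_inner]
    exact Finset.sum_congr rfl fun i _ => real_inner_smul_left _ _ _
  simp only [dotProduct]
  rw [Finset.sum_congr rfl key, Finset.sum_sub_distrib, Finset.sum_add_distrib,
    ← Finset.sum_mul, ← Finset.mul_sum, ← hnorm]
  ring


variable {n : Type*} [Fintype n] [DecidableEq n] {A : Matrix n n ℝ} (hA : A.IsHermitian)

lemma coe_ofReal_eig : (RCLike.ofReal ∘ hA.eigenvalues : n → ℝ) = hA.eigenvalues := by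
  funext r; simp [RCLike.ofReal]

lemma trace_eq_sum_eig : A.trace = ∑ r, hA.eigenvalues r := by
  have hU : (star (hA.eigenvectorUnitary : Matrix n n ℝ)) * hA.eigenvectorUnitary = 1 :=
    mem_unitaryGroup_iff'.mp hA.eigenvectorUnitary.2
  conv_lhs => rw [hA.spectral_theorem, Unitary.conjStarAlgAut_apply]
  rw [Matrix.trace_mul_cycle, hU, Matrix.one_mul, coe_ofReal_eig, Matrix.trace_diagonal]

lemma trace_cube_eq_sum_eig : (A * A * A).trace = ∑ r, hA.eigenvalues r ^ 3 := by
  have hU : (star (hA.eigenvectorUnitary : Matrix n n ℝ)) * hA.eigenvectorUnitary = 1 :=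
    mem_unitaryGroup_iff'.mp hA.eigenvectorUnitary.2
  have key : ∀ M : Matrix n n ℝ,
      (star (hA.eigenvectorUnitary : Matrix n n ℝ)) * ((hA.eigenvectorUnitary : Matrix n n ℝ) * M)
        = M := fun M => by rw [← Matrix.mul_assoc, hU, Matrix.one_mul]
  set U : Matrix n n ℝ := (hA.eigenvectorUnitary : Matrix n n ℝ)
  set D : Matrix n n ℝ := diagonal (RCLike.ofReal ∘ hA.eigenvalues)
  have hsp : A = U * D * star U := hA.spectral_theorem
  have h3 : A * A * A = U * (D * (D * (D * star U))) := by
    rw [hsp]; simp only [Matrix.mul_assoc]; rw [key, key]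
  rw [h3, Matrix.trace_mul_comm]
  simp only [Matrix.mul_assoc]
  rw [hU, Matrix.mul_one]
  have hD : D = diagonal hA.eigenvalues := by
    show diagonal (RCLike.ofReal ∘ hA.eigenvalues) = _
    rw [coe_ofReal_eig]
  rw [hD, Matrix.diagonal_mul_diagonal, Matrix.diagonal_mul_diagonal, Matrix.trace_diagonal]
  exact Finset.sum_congr rfl fun r _ => by show hA.eigenvalues r * _ = _; ring


variable {n : Type*} [Fintype n] [DecidableEq n] {A : Matrix n n ℝ}

noncomputable def vv (hA : A.IsHermitian) (r : n) : n → ℝ := ⇑(hA.eigenvectorBasis r)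

variable (hA : A.IsHermitian)

lemma eig_mulVec (r : n) : A *ᵥ vv hA r = hA.eigenvalues r • vv hA r :=
  hA.mulVec_eigenvectorBasis r

lemma rows_orth (i j : n) : (∑ r, vv hA r i * vv hA r j) = if i = j then 1 else 0 := by
  have hU : (hA.eigenvectorUnitary : Matrix n n ℝ) * star (hA.eigenvectorUnitary : Matrix n n ℝ)
      = 1 := mem_unitaryGroup_iff.mp hA.eigenvectorUnitary.2
  have := congrFun (congrFun hU i) j
  simpa [Matrix.mul_apply, Matrix.one_apply, vv] using this

lemma expand_pt (z : n → ℝ) (i : n) : ∑ r, (vv hA r ⬝ᵥ z) * vv hA r i = z i := by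
  simp only [dotProduct, Finset.sum_mul]
  rw [Finset.sum_comm]
  have : ∀ k ∈ univ, (∑ r, vv hA r k * z k * vv hA r i)
      = z k * (if k = i then 1 else 0) := by
    intro k _
    rw [← rows_orth hA k i, Finset.mul_sum]
    exact Finset.sum_congr rfl fun r _ => by ring
  rw [Finset.sum_congr rfl this]
  simp

lemma parseval_bilin (z w : n → ℝ) :
    z ⬝ᵥ w = ∑ r, (vv hA r ⬝ᵥ z) * (vv hA r ⬝ᵥ w) := by
  conv_lhs => rw [dotProduct]
  have : ∀ i ∈ univ, z i * w i = (∑ r, (vv hA r ⬝ᵥ z) * vv hA r i) * w i :=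
    fun i _ => by rw [expand_pt hA z i]
  rw [Finset.sum_congr rfl this]
  simp only [Finset.sum_mul]
  rw [Finset.sum_comm]
  refine Finset.sum_congr rfl fun r _ => ?_
  simp only [dotProduct, Finset.mul_sum]
  exact Finset.sum_congr rfl fun i _ => by ring

lemma coeff_mulVec (z : n → ℝ) (r : n) :
    vv hA r ⬝ᵥ (A *ᵥ z) = hA.eigenvalues r * (vv hA r ⬝ᵥ z) := by
  have hsymm : ∀ i k : n, A i k = A k i := fun i k => by
    have := congrFun (congrFun hA i) k
    simpa [Matrix.conjTranspose_apply] using this.symm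
  simp only [dotProduct, mulVec, dotProduct, Finset.mul_sum]
  rw [Finset.sum_comm]
  have : ∀ k ∈ univ, (∑ i, vv hA r i * (A i k * z k))
      = (hA.eigenvalues r * vv hA r k) * z k := by
    intro k _
    have hk : (A *ᵥ vv hA r) k = hA.eigenvalues r * vv hA r k := by
      rw [eig_mulVec hA r]; simp
    rw [← hk, mulVec, dotProduct, Finset.sum_mul]
    exact Finset.sum_congr rfl fun i _ => by rw [hsymm i k]; ring
  rw [Finset.sum_congr rfl this]
  exact Finset.sum_congr rfl fun k _ => by ring

lemma quad_eq (z : n → ℝ) :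
    z ⬝ᵥ (A *ᵥ z) = ∑ r, hA.eigenvalues r * (vv hA r ⬝ᵥ z)^2 := by
  rw [parseval_bilin hA]
  exact Finset.sum_congr rfl fun r _ => by rw [coeff_mulVec hA]; ring

lemma dot_self_eq (z : n → ℝ) : z ⬝ᵥ z = ∑ r, (vv hA r ⬝ᵥ z)^2 := by
  rw [parseval_bilin hA]
  exact Finset.sum_congr rfl fun r _ => by ring

lemma vv_dot (r s : n) : vv hA r ⬝ᵥ vv hA s = if r = s then 1 else 0 := by
  have h := orthonormal_iff_ite.mp hA.eigenvectorBasis.orthonormal r s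
  have h2 : ⟪hA.eigenvectorBasis r, hA.eigenvectorBasis s⟫ = vv hA r ⬝ᵥ vv hA s := by
    simp [PiLp.inner_apply, dotProduct, vv]
    exact Finset.sum_congr rfl fun _ _ => mul_comm _ _
  rw [← h2, h]


open Module

noncomputable def Lmap (x : Fin 10 → EuclideanSpace ℝ (Fin 4)) :
    (Fin 10 → ℝ) →ₗ[ℝ] (EuclideanSpace ℝ (Fin 4)) × ℝ :=
  LinearMap.prod (Fintype.linearCombination ℝ x)
    (Fintype.linearCombination ℝ (fun _ : Fin 10 => (1:ℝ)))

lemma Lmap_apply (x : Fin 10 → EuclideanSpace ℝ (Fin 4)) (z : Fin 10 → ℝ) :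
    Lmap x z = (∑ i, z i • x i, ∑ i, z i) := by
  simp [Lmap, Fintype.linearCombination_apply, smul_eq_mul]

lemma finrank_ker_L (x : Fin 10 → EuclideanSpace ℝ (Fin 4)) :
    5 ≤ finrank ℝ (LinearMap.ker (Lmap x)) := by
  have h := (Lmap x).finrank_range_add_finrank_ker
  have h10 : finrank ℝ (Fin 10 → ℝ) = 10 := by
    simp [Module.finrank_fintype_fun_eq_card]
  have hr : finrank ℝ (LinearMap.range (Lmap x)) ≤ 5 := by
    have := Submodule.finrank_le (LinearMap.range (Lmap x))
    have hcod : finrank ℝ ((EuclideanSpace ℝ (Fin 4)) × ℝ) = 5 := by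
      rw [Module.finrank_prod, finrank_euclideanSpace_fin, Module.finrank_self]
    omega
  omega

lemma B_fixes {z : Fin 10 → ℝ} (hz1 : ∑ i, z i • x i = 0) (hz2 : ∑ i, z i = 0) :
    B x *ᵥ z = z := by
  funext i
  rw [B_mulVec, hz1, hz2, inner_zero_right]
  ring

/-- coefficients on non-1 eigenvalues vanish for fixed vectors -/
lemma coeff_zero_of_fixed {z : Fin 10 → ℝ} (hfix : B x *ᵥ z = z) {r : Fin 10}
    (hr : (B_herm (x := x)).eigenvalues r ≠ 1) : vv (B_herm (x := x)) r ⬝ᵥ z = 0 := by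
  have h := coeff_mulVec (B_herm (x := x)) z r
  rw [hfix] at h
  have : (1 - (B_herm (x := x)).eigenvalues r) * (vv (B_herm (x := x)) r ⬝ᵥ z) = 0 := by
    linarith [h]
  rcases mul_eq_zero.mp this with h' | h'
  · exact absurd (by linarith : (B_herm (x := x)).eigenvalues r = 1) hr
  · exact h'

lemma ker_le_span_ones (x : Fin 10 → EuclideanSpace ℝ (Fin 4)) :
    LinearMap.ker (Lmap x) ≤ Submodule.span ℝ
      ↑((univ.filter fun r => (B_herm (x := x)).eigenvalues r = 1).image
          (vv (B_herm (x := x)))) := by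
  intro z hz
  rw [LinearMap.mem_ker, Lmap_apply, Prod.mk_eq_zero] at hz
  have hfix : B x *ᵥ z = z := B_fixes hz.1 hz.2
  have hexp : z = ∑ r ∈ univ.filter (fun r => (B_herm (x := x)).eigenvalues r = 1),
      (vv (B_herm (x := x)) r ⬝ᵥ z) • vv (B_herm (x := x)) r := by
    funext i
    rw [Finset.sum_apply]
    simp only [Pi.smul_apply, smul_eq_mul]
    rw [← expand_pt (B_herm (x := x)) z i]
    exact (Finset.sum_subset (Finset.filter_subset _ _) fun r _ hr => by
      rw [coeff_zero_of_fixed hfix (by simpa using hr), zero_mul]).symm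
  rw [hexp]
  exact Submodule.sum_mem _ fun r hr => Submodule.smul_mem _ _
    (Submodule.subset_span (Finset.mem_coe.mpr (Finset.mem_image_of_mem _ hr)))

lemma finrank_ker_le_card_ones (x : Fin 10 → EuclideanSpace ℝ (Fin 4)) :
    finrank ℝ (LinearMap.ker (Lmap x))
      ≤ (univ.filter fun r => (B_herm (x := x)).eigenvalues r = 1).card := by
  have h1 := Submodule.finrank_mono (ker_le_span_ones x)
  have h2 := finrank_span_finset_le_card (R := ℝ)
    ((univ.filter fun r => (B_herm (x := x)).eigenvalues r = 1).image (vv (B_herm (x := x))))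
  have h3 := Finset.card_image_le (s := univ.filter fun r => (B_herm (x := x)).eigenvalues r = 1)
    (f := vv (B_herm (x := x)))
  unfold Set.finrank at h2
  omega

lemma card_ones_ge5 (x : Fin 10 → EuclideanSpace ℝ (Fin 4)) :
    5 ≤ (univ.filter fun r => (B_herm (x := x)).eigenvalues r = 1).card :=
  le_trans (finrank_ker_L x) (finrank_ker_le_card_ones x)

section Spectral

variable {x : Fin 10 → EuclideanSpace ℝ (Fin 4)}

local notation "hB" => B_herm (x := x)
local notation "dd" => Matrix.IsHermitian.eigenvalues (B_herm (x := x))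

lemma sum_vv_mul (r s : Fin 10) :
    ∑ i, vv hB r i * vv hB s i = if r = s then 1 else 0 := vv_dot hB r s

lemma sum_vv_sq (r : Fin 10) : ∑ i, vv hB r i ^ 2 = 1 := by
  have h := vv_dot hB r r
  rw [if_pos rfl] at h
  rw [← h, dotProduct]
  exact Finset.sum_congr rfl fun i _ => (sq _)

lemma sigma_sq_le (r : Fin 10) : (∑ i, vv hB r i) ^ 2 ≤ 10 := by
  have h := Finset.sum_mul_sq_le_sq_mul_sq univ (fun i => vv hB r i) (fun _ => (1:ℝ))
  simp only [mul_one, one_pow] at h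
  rw [Finset.sum_const, Finset.card_univ, Fintype.card_fin] at h
  calc (∑ i, vv hB r i) ^ 2 ≤ (∑ i, vv hB r i ^ 2) * 10 := by
        simpa using h
    _ = 10 := by rw [sum_vv_sq]; ring

lemma eig_eq_quad (r : Fin 10) : dd r = vv hB r ⬝ᵥ (B x *ᵥ vv hB r) := by
  rw [coeff_mulVec hB, vv_dot hB r r, if_pos rfl, mul_one]

lemma trace_zero (hx1 : ∀ i, ‖x i‖ = 1) : ∑ r, dd r = 0 := by
  rw [← trace_eq_sum_eig hB]
  unfold Matrix.trace
  rw [Finset.sum_congr rfl fun i _ => (by rw [Matrix.diag_apply, B_diag hx1] :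
    (B x).diag i = 0)]
  simp

lemma cube_nonneg (hx1 : ∀ i, ‖x i‖ = 1)
    (hxt : ∀ i j, i ≠ j → ⟪x i, x j⟫ ≤ (1/6:ℝ)) : 0 ≤ ∑ r, dd r ^ 3 := by
  rw [← trace_cube_eq_sum_eig hB]
  unfold Matrix.trace
  refine Finset.sum_nonneg fun i _ => ?_
  rw [Matrix.diag_apply, Matrix.mul_apply]
  refine Finset.sum_nonneg fun j _ => mul_nonneg ?_ (B_nonneg hx1 hxt j i)
  rw [Matrix.mul_apply]
  exact Finset.sum_nonneg fun k _ => mul_nonneg (B_nonneg hx1 hxt i k) (B_nonneg hx1 hxt k j)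

lemma quadform_le (z : Fin 10 → ℝ) (hz : ∑ i, z i = 0) :
    z ⬝ᵥ (B x *ᵥ z) ≤ ∑ i, z i ^ 2 := by
  rw [quadform, hz]
  have := sq_nonneg ‖∑ j, z j • x j‖
  nlinarith

lemma dot_self_sq (z : Fin 10 → ℝ) : z ⬝ᵥ z = ∑ i, z i ^ 2 :=
  Finset.sum_congr rfl fun i _ => (sq _).symm

lemma eig_le_one_of_sum_zero {r : Fin 10} (h : ∑ i, vv hB r i = 0) : dd r ≤ 1 := by
  have h1 := quadform_le (x := x) (vv hB r) h
  rw [← eig_eq_quad, sum_vv_sq] at h1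
  exact h1

lemma eig_le_three (r : Fin 10) : dd r ≤ 3 := by
  have h1 : vv hB r ⬝ᵥ (B x *ᵥ vv hB r)
      = (∑ i, vv hB r i ^ 2) + (∑ i, vv hB r i)^2/5 - 6/5 * ‖∑ j, vv hB r j • x j‖^2 :=
    quadform _
  have h2 := sigma_sq_le (x := x) r
  have h3 := sq_nonneg ‖∑ j, vv hB r j • x j‖
  rw [← eig_eq_quad, sum_vv_sq] at h1
  nlinarith

lemma unique_big {r s : Fin 10} (hrs : r ≠ s) (hr : 1 < dd r) (hs : 1 < dd s) : False := by
  have hσr : ∑ i, vv hB r i ≠ 0 := fun h => absurd (eig_le_one_of_sum_zero h) (by linarith)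
  have hσs : ∑ i, vv hB s i ≠ 0 := fun h => absurd (eig_le_one_of_sum_zero h) (by linarith)
  set a := ∑ i, vv hB s i with hadef
  set b := ∑ i, vv hB r i with hbdef
  set z : Fin 10 → ℝ := a • vv hB r - b • vv hB s with hzdef
  have hzsum : ∑ i, z i = 0 := by
    simp only [hzdef, Pi.sub_apply, Pi.smul_apply, smul_eq_mul, Finset.sum_sub_distrib,
      ← Finset.mul_sum]
    rw [← hadef, ← hbdef]; ring
  have hdot : ∀ w : Fin 10 → ℝ, z ⬝ᵥ w = a * (vv hB r ⬝ᵥ w) - b * (vv hB s ⬝ᵥ w) := by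
    intro w
    simp only [hzdef, sub_dotProduct, smul_dotProduct, smul_eq_mul]
  have h1 : z ⬝ᵥ vv hB r = a := by
    rw [hdot, vv_dot, vv_dot, if_pos rfl, if_neg (Ne.symm hrs)]; ring
  have h2 : z ⬝ᵥ vv hB s = -b := by
    rw [hdot, vv_dot, vv_dot, if_neg hrs, if_pos rfl]; ring
  have hmv : B x *ᵥ z = (a * dd r) • vv hB r - (b * dd s) • vv hB s := by
    simp only [hzdef, Matrix.mulVec_sub, Matrix.mulVec_smul, eig_mulVec]
    funext i
    simp only [Pi.sub_apply, Pi.smul_apply, smul_eq_mul]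
    ring
  have hquad : z ⬝ᵥ (B x *ᵥ z) = dd r * a^2 + dd s * b^2 := by
    rw [hmv]
    rw [show ((a * dd r) • vv hB r - (b * dd s) • vv hB s : Fin 10 → ℝ)
        = (a * dd r) • vv hB r + (-(b * dd s)) • vv hB s by
      funext i; simp only [Pi.sub_apply, Pi.add_apply, Pi.smul_apply, smul_eq_mul]; ring]
    rw [dotProduct_add, dotProduct_smul, dotProduct_smul, smul_eq_mul, smul_eq_mul, h1, h2]
    ring
  have hzz : z ⬝ᵥ z = a^2 + b^2 := by
    rw [dotProduct_comm] at h1 h2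
    rw [hdot z, h1, h2]; ring
  have hle := quadform_le (x := x) z hzsum
  rw [← dot_self_sq, hzz, hquad] at hle
  have ha2 : 0 < a^2 := lt_of_le_of_ne (sq_nonneg a) (Ne.symm (pow_ne_zero 2 hσs))
  have hb2 : 0 < b^2 := lt_of_le_of_ne (sq_nonneg b) (Ne.symm (pow_ne_zero 2 hσr))
  nlinarith

lemma exists_big (hx1 : ∀ i, ‖x i‖ = 1)
    (hxt : ∀ i j, i ≠ j → ⟪x i, x j⟫ ≤ (1/6:ℝ)) : ∃ r, 1 < dd r := by
  by_contra hall
  push_neg at hall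
  -- kernel of the combination map is contained in ker (Lmap x)
  set L1 : (Fin 10 → ℝ) →ₗ[ℝ] EuclideanSpace ℝ (Fin 4) := Fintype.linearCombination ℝ x with hL1
  have hker : LinearMap.ker L1 ≤ LinearMap.ker (Lmap x) := by
    intro z hz
    rw [LinearMap.mem_ker] at hz
    have hz' : ∑ i, z i • x i = 0 := by
      rw [← hz, hL1]; simp [Fintype.linearCombination_apply]
    have hq : z ⬝ᵥ (B x *ᵥ z) = (∑ i, z i ^ 2) + (∑ i, z i)^2/5 := by
      rw [quadform, hz']
      simp
    have hle : z ⬝ᵥ (B x *ᵥ z) ≤ ∑ i, z i ^ 2 := by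
      rw [quad_eq hB, ← dot_self_sq, dot_self_eq hB]
      exact Finset.sum_le_sum fun r _ => by nlinarith [sq_nonneg (vv hB r ⬝ᵥ z), hall r]
    have hzero : ∑ i, z i = 0 := by
      have h2 : (∑ i, z i)^2 ≤ 0 := by linarith
      have h3 : (∑ i, z i)^2 = 0 := le_antisymm h2 (sq_nonneg _)
      exact pow_eq_zero_iff two_ne_zero |>.mp h3
    rw [LinearMap.mem_ker, Lmap_apply, Prod.mk_eq_zero]
    exact ⟨hz', hzero⟩
  have hrk : 6 ≤ finrank ℝ (LinearMap.ker L1) := by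
    have h := L1.finrank_range_add_finrank_ker
    have h10 : finrank ℝ (Fin 10 → ℝ) = 10 := by simp [Module.finrank_fintype_fun_eq_card]
    have hr : finrank ℝ (LinearMap.range L1) ≤ 4 := by
      have := Submodule.finrank_le (LinearMap.range L1)
      rw [finrank_euclideanSpace_fin] at this
      omega
    omega
  have hmono := Submodule.finrank_mono hker
  have hcount := finrank_ker_le_card_ones x
  set m := (univ.filter fun r => dd r = 1).card with hmdef
  have hm6 : 6 ≤ m := by omega
  -- numeric contradiction
  set S := univ.filter (fun r => dd r = 1) with hSdef
  set T := univ.filter (fun r => ¬ dd r = 1) with hTdef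
  have hsplit : ∑ r ∈ S, dd r + ∑ r ∈ T, dd r = 0 := by
    rw [hSdef, hTdef, Finset.sum_filter_add_sum_filter_not]
    exact trace_zero hx1
  have hsplit3 : ∑ r ∈ S, dd r ^3 + ∑ r ∈ T, dd r ^3 = ∑ r, dd r ^3 := by
    rw [hSdef, hTdef, Finset.sum_filter_add_sum_filter_not]
  have hS1 : ∑ r ∈ S, dd r = (m : ℝ) := by
    rw [Finset.sum_congr rfl (fun r hr => (Finset.mem_filter.mp hr).2), Finset.sum_const,
      hmdef]
    simp <;> rfl
  have hS3 : ∑ r ∈ S, dd r ^3 = (m : ℝ) := by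
    rw [Finset.sum_congr rfl (fun r hr => by rw [(Finset.mem_filter.mp hr).2, one_pow]),
      Finset.sum_const, hmdef]
    simp
  have hcards : S.card + T.card = 10 := by
    rw [hSdef, hTdef, Finset.card_filter_add_card_filter_not]
    simp
  have hT3 : ∑ r ∈ T, dd r ^3 ≤ 12 * (∑ r ∈ T, dd r) + 16 * T.card := by
    calc ∑ r ∈ T, dd r ^3 ≤ ∑ r ∈ T, (12 * dd r + 16) := by
          refine Finset.sum_le_sum fun r _ => ?_
          have h1 := hall r
          nlinarith [sq_nonneg (dd r + 2), mul_nonneg (sq_nonneg (dd r + 2)) (by linarith : (0:ℝ) ≤ 4 - dd r)]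
      _ = 12 * (∑ r ∈ T, dd r) + 16 * T.card := by
          rw [Finset.sum_add_distrib, ← Finset.mul_sum, Finset.sum_const]
          simp [mul_comm]
  have hcube := cube_nonneg hx1 hxt
  have hTsum : ∑ r ∈ T, dd r = -(m:ℝ) := by linarith
  have hTcard : (T.card : ℝ) = 10 - (m:ℝ) := by
    have h : (S.card : ℝ) + T.card = 10 := by exact_mod_cast hcards
    have h2 : (m:ℝ) = (S.card : ℝ) := by rw [hmdef]
    linarith
  have hmR : (6:ℝ) ≤ (m:ℝ) := by exact_mod_cast hm6
  nlinarith [hsplit3, hS3, hT3, hcube, hTsum, hTcard]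

lemma eigvec_structure (hx1 : ∀ i, ‖x i‖ = 1) {r0 : Fin 10} (haeq : dd r0 = 3) :
    (∑ i, vv hB r0 i)^2 = 10 ∧ (∑ j, vv hB r0 j • x j) = 0 ∧
      (∀ i, vv hB r0 i = (∑ i, vv hB r0 i)/10) := by
  have hquad := quadform (x := x) (vv hB r0)
  rw [← eig_eq_quad, sum_vv_sq, haeq] at hquad
  have hσle := sigma_sq_le (x := x) r0
  have hwnn := sq_nonneg ‖∑ j, vv hB r0 j • x j‖
  have hw0 : ‖∑ j, vv hB r0 j • x j‖^2 = 0 := by nlinarith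
  have hweq : (∑ j, vv hB r0 j • x j) = 0 :=
    norm_eq_zero.mp (pow_eq_zero_iff two_ne_zero |>.mp hw0)
  have hσ10 : (∑ i, vv hB r0 i)^2 = 10 := by
    rw [hw0] at hquad
    nlinarith
  refine ⟨hσ10, hweq, fun i => ?_⟩
  have h1 : (B x *ᵥ vv hB r0) i = 3 * vv hB r0 i := by
    rw [eig_mulVec hB r0, haeq]
    simp [smul_eq_mul]
  rw [B_mulVec, hweq, inner_zero_right] at h1
  linarith

lemma classification (hx1 : ∀ i, ‖x i‖ = 1)
    (hxt : ∀ i j, i ≠ j → ⟪x i, x j⟫ ≤ (1/6:ℝ)) :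
    ∃ (r0 : Fin 10), dd r0 = 3 ∧ (∀ r, r ≠ r0 → dd r = 1 ∨ dd r = -2) := by
  obtain ⟨r0, hr0⟩ := exists_big hx1 hxt
  have huniq : ∀ r, r ≠ r0 → dd r ≤ 1 :=
    fun r hne => le_of_not_gt (fun h => unique_big hne h hr0)
  have ha3 : dd r0 ≤ 3 := eig_le_three r0
  set S := univ.filter (fun r => dd r = 1) with hSdef
  have hm5 : 5 ≤ S.card := card_ones_ge5 x
  have hr0S : r0 ∉ S := by
    rw [hSdef, Finset.mem_filter]
    rintro ⟨-, h⟩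
    linarith
  set R := univ \ (insert r0 S) with hRdef
  have hsub : insert r0 S ⊆ univ := Finset.subset_univ _
  have hcardins : (insert r0 S).card = S.card + 1 := Finset.card_insert_of_notMem hr0S
  have hm10 : S.card + 1 ≤ 10 := by
    have h := Finset.card_le_card hsub
    rw [hcardins] at h
    simpa using h
  have hcardR : R.card = 9 - S.card := by
    rw [hRdef, Finset.card_sdiff_of_subset hsub, hcardins]
    simp
  have hS1 : ∑ r ∈ S, dd r = (S.card : ℝ) := by
    rw [Finset.sum_congr rfl (fun r hr => (Finset.mem_filter.mp hr).2), Finset.sum_const]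
    simp <;> rfl
  have hS3 : ∑ r ∈ S, dd r ^3 = (S.card : ℝ) := by
    rw [Finset.sum_congr rfl (fun r hr => by rw [(Finset.mem_filter.mp hr).2, one_pow]),
      Finset.sum_const]
    simp
  have hsd := Finset.sum_sdiff (f := dd) hsub
  have hsd3 := Finset.sum_sdiff (f := fun r => dd r ^ 3) hsub
  rw [Finset.sum_insert hr0S, ← hRdef] at hsd hsd3
  have htr := trace_zero (x := x) hx1
  have hcube := cube_nonneg (x := x) hx1 hxt
  have hsumsplit : ∑ r ∈ R, dd r = -(dd r0 + (S.card:ℝ)) := by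
    rw [htr] at hsd
    linarith [hsd, hS1]
  have hsumsplit3 : ∑ r ∈ R, dd r ^ 3 = (∑ r, dd r ^3) - (dd r0 ^3 + (S.card:ℝ)) := by
    have h := hsd3
    linarith [h, hS3]
  have hRne : ∀ r ∈ R, r ≠ r0 := by
    intro r hr
    rw [hRdef, Finset.mem_sdiff] at hr
    intro h
    exact hr.2 (h ▸ Finset.mem_insert_self r0 S)
  have hRle : ∀ r ∈ R, dd r ≤ 1 := fun r hr => huniq r (hRne r hr)
  have hRbound : ∑ r ∈ R, dd r ^3 ≤ 12 * (∑ r ∈ R, dd r) + 16 * R.card := by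
    calc ∑ r ∈ R, dd r ^3 ≤ ∑ r ∈ R, (12 * dd r + 16) := by
          refine Finset.sum_le_sum fun r hr => ?_
          have h1 := hRle r hr
          nlinarith [mul_nonneg (sq_nonneg (dd r + 2)) (by linarith : (0:ℝ) ≤ 4 - dd r)]
      _ = _ := by
          rw [Finset.sum_add_distrib, ← Finset.mul_sum, Finset.sum_const, nsmul_eq_mul]
          ring
  have hRcard : (R.card : ℝ) = 9 - (S.card:ℝ) := by
    rw [hcardR]
    push_cast [Nat.cast_sub (by omega : S.card ≤ 9)]
    ring
  have hmR : (5:ℝ) ≤ (S.card:ℝ) := by exact_mod_cast hm5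
  have hmaster : 0 ≤ dd r0 ^3 - 12*(dd r0) + 144 - 27*(S.card:ℝ) := by nlinarith
  have ha1 : 1 < dd r0 := hr0
  have haeq : dd r0 = 3 := by
    by_contra hne
    have halt : dd r0 < 3 := lt_of_le_of_ne ha3 hne
    nlinarith [mul_pos (by linarith : (0:ℝ) < 3 - dd r0)
      (by nlinarith : (0:ℝ) < dd r0 ^2 + 3*(dd r0) - 3)]
  have hmeqR : (S.card:ℝ) = 5 := by
    rw [haeq] at hmaster
    norm_num at hmaster
    linarith
  have hRsum : ∑ r ∈ R, dd r = -8 := by rw [hsumsplit, haeq, hmeqR]; norm_num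
  have hRsum3 : -32 ≤ ∑ r ∈ R, dd r ^3 := by
    rw [hsumsplit3, haeq, hmeqR]
    norm_num
    linarith
  have hRcard4 : (R.card : ℝ) = 4 := by rw [hRcard, hmeqR]; norm_num
  have hnn : ∀ r ∈ R, 0 ≤ 12 * dd r + 16 - dd r ^3 := by
    intro r hr
    have h1 := hRle r hr
    nlinarith [mul_nonneg (sq_nonneg (dd r + 2)) (by linarith : (0:ℝ) ≤ 4 - dd r)]
  have heq0 : ∑ r ∈ R, (12 * dd r + 16 - dd r ^3) = 0 := by
    have hsum0 : ∑ r ∈ R, (12 * dd r + 16 - dd r ^3) ≤ 0 := by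
      rw [Finset.sum_sub_distrib, Finset.sum_add_distrib, ← Finset.mul_sum, Finset.sum_const,
        hRsum, nsmul_eq_mul, hRcard4]
      linarith
    exact le_antisymm hsum0 (Finset.sum_nonneg hnn)
  have hterms := (Finset.sum_eq_zero_iff_of_nonneg hnn).mp heq0
  have hRval : ∀ r ∈ R, dd r = -2 := by
    intro r hr
    have h0 := hterms r hr
    have hle1 := hRle r hr
    have hfac : (dd r + 2)^2 * (dd r - 4) = 0 := by linear_combination -h0
    have h4 : dd r - 4 ≠ 0 := by intro h; nlinarith [h]
    have hsq : (dd r + 2)^2 = 0 := by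
      rcases mul_eq_zero.mp hfac with h | h
      · exact h
      · exact absurd h h4
    have := pow_eq_zero_iff two_ne_zero |>.mp hsq
    linarith
  refine ⟨r0, haeq, fun r hne => ?_⟩
  by_cases hrS : r ∈ S
  · left; exact (Finset.mem_filter.mp hrS).2
  · right
    refine hRval r ?_
    rw [hRdef, Finset.mem_sdiff]
    exact ⟨Finset.mem_univ r, fun hmem => (Finset.mem_insert.mp hmem).elim hne hrS⟩

lemma B_entry (i j : Fin 10) :
    B x i j = ∑ r, dd r * vv hB r i * vv hB r j := by
  have hwi : (B x *ᵥ Pi.single j 1) i = B x i j := by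
    simp [mulVec, dotProduct, Pi.single_apply, mul_ite]
  have hcoef : ∀ r, vv hB r ⬝ᵥ (B x *ᵥ Pi.single j 1) = dd r * vv hB r j := by
    intro r
    rw [coeff_mulVec hB]
    congr 1
    simp [dotProduct, Pi.single_apply, mul_ite]
  have h := expand_pt hB (B x *ᵥ Pi.single j 1) i
  rw [hwi] at h
  rw [← h]
  exact Finset.sum_congr rfl fun r _ => by rw [hcoef r]; ring

lemma BB_entry (i j : Fin 10) :
    (B x * B x) i j = ∑ r, dd r ^ 2 * vv hB r i * vv hB r j := by
  have hwi : ((B x * B x) *ᵥ Pi.single j 1) i = (B x * B x) i j := by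
    simp [mulVec, dotProduct, Pi.single_apply, mul_ite]
  have hcoef : ∀ r, vv hB r ⬝ᵥ ((B x * B x) *ᵥ Pi.single j 1) = dd r ^2 * vv hB r j := by
    intro r
    rw [← Matrix.mulVec_mulVec, coeff_mulVec hB, coeff_mulVec hB]
    have : vv hB r ⬝ᵥ Pi.single j 1 = vv hB r j := by
      simp [dotProduct, Pi.single_apply, mul_ite]
    rw [this]
    ring
  have h := expand_pt hB ((B x * B x) *ᵥ Pi.single j 1) i
  rw [hwi] at h
  rw [← h]
  exact Finset.sum_congr rfl fun r _ => by rw [hcoef r]; ring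

lemma key_identity (hx1 : ∀ i, ‖x i‖ = 1)
    (hxt : ∀ i j, i ≠ j → ⟪x i, x j⟫ ≤ (1/6:ℝ)) (i j : Fin 10) :
    (B x * B x) i j = 1 + 2*(if i = j then (1:ℝ) else 0) - B x i j := by
  obtain ⟨r0, haeq, hclass⟩ := classification hx1 hxt
  obtain ⟨hσ10, hweq, hvec⟩ := eigvec_structure hx1 haeq
  have hmain : (B x * B x) i j + B x i j - 2*(if i = j then (1:ℝ) else 0)
      = ∑ r, (dd r^2 + dd r - 2) * (vv hB r i * vv hB r j) := by
    rw [BB_entry, B_entry, ← rows_orth hB i j, Finset.mul_sum, ← Finset.sum_add_distrib,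
      ← Finset.sum_sub_distrib]
    exact Finset.sum_congr rfl fun r _ => by ring
  have hzero : ∀ r ∈ univ, r ≠ r0 → (dd r^2 + dd r - 2) * (vv hB r i * vv hB r j) = 0 := by
    intro r _ hne
    rcases hclass r hne with h | h <;> rw [h] <;> ring
  have hsum : ∑ r, (dd r^2 + dd r - 2) * (vv hB r i * vv hB r j)
      = (dd r0^2 + dd r0 - 2) * (vv hB r0 i * vv hB r0 j) :=
    Finset.sum_eq_single r0 hzero (fun h => absurd (Finset.mem_univ r0) h)
  set σ := ∑ k, vv hB r0 k
  have : (dd r0^2 + dd r0 - 2) * (vv hB r0 i * vv hB r0 j) = 1 := by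
    rw [haeq, hvec i, hvec j]
    nlinarith [hσ10]
  rw [hsum, this] at hmain
  linarith


lemma B_structure (hx1 : ∀ i, ‖x i‖ = 1)
    (hxt : ∀ i j, i ≠ j → ⟪x i, x j⟫ ≤ (1/6:ℝ)) :
    (∀ i j, B x i j = 0 ∨ B x i j = 1) ∧ (∀ i, ∑ j, B x i j = 3) := by
  obtain ⟨r0, haeq, hclass⟩ := classification hx1 hxt
  obtain ⟨hσ10, hweq, hvec⟩ := eigvec_structure hx1 haeq
  set σ := ∑ k, vv hB r0 k with hσdef
  have hσne : σ ≠ 0 := by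
    intro h
    rw [h] at hσ10
    norm_num at hσ10
  have hrow : ∀ i, ∑ j, B x i j = 3 := by
    intro i
    have h1 : (fun _ => (1:ℝ)) = (10/σ) • vv hB r0 := by
      funext k
      rw [Pi.smul_apply, hvec k, smul_eq_mul]
      field_simp
    have h2 : (B x *ᵥ (fun _ => (1:ℝ))) i = 3 := by
      rw [h1, Matrix.mulVec_smul, eig_mulVec hB, haeq]
      rw [Pi.smul_apply, Pi.smul_apply, hvec i]
      simp only [smul_eq_mul]
      field_simp
    rw [← h2]
    simp [mulVec, dotProduct]
  have hBBnn : ∀ i j, 0 ≤ (B x * B x) i j := by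
    intro i j
    rw [Matrix.mul_apply]
    exact Finset.sum_nonneg fun k _ => mul_nonneg (B_nonneg hx1 hxt i k) (B_nonneg hx1 hxt k j)
  have hle1 : ∀ i k, B x i k ≤ 1 := by
    intro i k
    rcases eq_or_ne i k with rfl | h
    · rw [B_diag hx1]; norm_num
    · have h1 := key_identity hx1 hxt i k
      have h2 := hBBnn i k
      rw [h1, if_neg h] at h2
      linarith
  have hBBdiag : ∀ i, ∑ k, B x i k ^2 = 3 := by
    intro i
    have h1 := key_identity hx1 hxt i i
    rw [if_pos rfl, B_diag hx1] at h1
    rw [Matrix.mul_apply] at h1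
    have hsq : (∑ k, B x i k ^2) = ∑ k, B x i k * B x k i :=
      Finset.sum_congr rfl fun k _ => by rw [sq, B_symm (x := x) k i]
    rw [hsq]
    linarith
  refine ⟨fun i j => ?_, hrow⟩
  have hzero : ∑ k, B x i k * (1 - B x i k) = 0 := by
    have : ∑ k, B x i k * (1 - B x i k) = (∑ k, B x i k) - (∑ k, B x i k ^2) := by
      rw [← Finset.sum_sub_distrib]
      exact Finset.sum_congr rfl fun k _ => by ring
    rw [this, hrow i, hBBdiag i]
    ring
  have hnn : ∀ k ∈ univ, 0 ≤ B x i k * (1 - B x i k) := fun k _ =>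
    mul_nonneg (B_nonneg hx1 hxt i k) (by linarith [hle1 i k])
  have := (Finset.sum_eq_zero_iff_of_nonneg hnn).mp hzero j (Finset.mem_univ j)
  rcases mul_eq_zero.mp this with h | h
  · left; exact h
  · right; linarith

lemma row_count_one (hx1 : ∀ i, ‖x i‖ = 1)
    (hxt : ∀ i j, i ≠ j → ⟪x i, x j⟫ ≤ (1/6:ℝ)) (i : Fin 10) :
    (univ.filter fun j => B x i j = 1).card = 3 := by
  obtain ⟨hdich, hrow⟩ := B_structure hx1 hxt
  have h1 : ((univ.filter fun j => B x i j = 1).card : ℝ) = ∑ j, B x i j := by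
    rw [Finset.natCast_card_filter]
    refine Finset.sum_congr rfl fun j _ => ?_
    rcases hdich i j with h | h
    · rw [if_neg (by rw [h]; norm_num), h]
    · rw [if_pos h, h]
  rw [hrow i] at h1
  exact_mod_cast h1

lemma filter_neg_eq (hx1 : ∀ i, ‖x i‖ = 1)
    (hxt : ∀ i j, i ≠ j → ⟪x i, x j⟫ ≤ (1/6:ℝ)) (i : Fin 10) :
    (univ.filter fun j => i ≠ j ∧ ⟪x i, x j⟫ = (-2/3 : ℝ))
      = univ.filter fun j => B x i j = 1 := by
  ext j
  simp only [Finset.mem_filter, Finset.mem_univ, true_and]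
  constructor
  · rintro ⟨hne, ht⟩
    rw [B_apply, if_neg hne, ht]
    norm_num
  · intro h
    have hne : i ≠ j := by
      rintro rfl
      rw [B_diag hx1] at h
      norm_num at h
    refine ⟨hne, ?_⟩
    rw [B_apply, if_neg hne] at h
    linarith

lemma row_count_neg (hx1 : ∀ i, ‖x i‖ = 1)
    (hxt : ∀ i j, i ≠ j → ⟪x i, x j⟫ ≤ (1/6:ℝ)) (i : Fin 10) :
    (univ.filter fun j => i ≠ j ∧ ⟪x i, x j⟫ = (-2/3 : ℝ)).card = 3 := by
  rw [filter_neg_eq hx1 hxt i, row_count_one hx1 hxt i]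

lemma row_count_pos (hx1 : ∀ i, ‖x i‖ = 1)
    (hxt : ∀ i j, i ≠ j → ⟪x i, x j⟫ ≤ (1/6:ℝ)) (i : Fin 10) :
    (univ.filter fun j => i ≠ j ∧ ⟪x i, x j⟫ = (1/6 : ℝ)).card = 6 := by
  obtain ⟨hdich, hrow⟩ := B_structure hx1 hxt
  have hset : (univ.filter fun j => i ≠ j ∧ ⟪x i, x j⟫ = (1/6 : ℝ))
      = (univ.filter fun j => i ≠ j) \ (univ.filter fun j => B x i j = 1) := by
    ext j
    simp only [Finset.mem_filter, Finset.mem_univ, true_and, Finset.mem_sdiff]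
    constructor
    · rintro ⟨hne, ht⟩
      refine ⟨hne, fun h => ?_⟩
      rw [B_apply, if_neg hne, ht] at h
      norm_num at h
    · rintro ⟨hne, hnB⟩
      refine ⟨hne, ?_⟩
      rcases hdich i j with h | h
      · rw [B_apply, if_neg hne] at h
        linarith
      · exact absurd h hnB
  rw [hset, Finset.card_sdiff_of_subset]
  · have h1 : (univ.filter fun j => i ≠ j) = univ.erase i := Finset.filter_ne univ i
    rw [h1, Finset.card_erase_of_mem (Finset.mem_univ i), row_count_one hx1 hxt i]
    simp
  · intro j hj
    rw [Finset.mem_filter] at hj ⊢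
    refine ⟨Finset.mem_univ j, fun h => ?_⟩
    subst h
    rw [B_diag hx1] at hj
    have := hj.2
    norm_num at this

lemma global_count_neg (hx1 : ∀ i, ‖x i‖ = 1)
    (hxt : ∀ i j, i ≠ j → ⟪x i, x j⟫ ≤ (1/6:ℝ)) :
    ((univ : Finset (Fin 10 × Fin 10)).filter fun q =>
      q.1 ≠ q.2 ∧ ⟪x q.1, x q.2⟫ = (-2/3 : ℝ)).card = 30 := by
  rw [Finset.card_filter, ← Finset.univ_product_univ, Finset.sum_product]
  have : ∀ i ∈ univ, (∑ j, if i ≠ j ∧ ⟪x i, x j⟫ = (-2/3 : ℝ) then 1 else 0) = 3 := by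
    intro i _
    rw [← Finset.card_filter]
    exact row_count_neg hx1 hxt i
  rw [Finset.sum_congr rfl this]
  simp

lemma global_count_pos (hx1 : ∀ i, ‖x i‖ = 1)
    (hxt : ∀ i j, i ≠ j → ⟪x i, x j⟫ ≤ (1/6:ℝ)) :
    ((univ : Finset (Fin 10 × Fin 10)).filter fun q =>
      q.1 ≠ q.2 ∧ ⟪x q.1, x q.2⟫ = (1/6 : ℝ)).card = 60 := by
  rw [Finset.card_filter, ← Finset.univ_product_univ, Finset.sum_product]
  have : ∀ i ∈ univ, (∑ j, if i ≠ j ∧ ⟪x i, x j⟫ = (1/6 : ℝ) then 1 else 0) = 6 := by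
    intro i _
    rw [← Finset.card_filter]
    exact row_count_pos hx1 hxt i
  rw [Finset.sum_congr rfl this]
  simp


end Spectral

end PetersenAux

open PetersenAux Finset

theorem petersen_pair_distance_distribution
    (C : Finset (EuclideanSpace ℝ (Fin 4)))
    (hcard : C.card = 10)
    (hunit : ∀ c ∈ C, ‖c‖ = 1)
    (hinner : ∀ c ∈ C, ∀ c' ∈ C, c ≠ c' → ⟪c, c'⟫ ≤ (1 / 6 : ℝ)) :
    {p : EuclideanSpace ℝ (Fin 4) × EuclideanSpace ℝ (Fin 4) |
      p.1 ∈ C ∧ p.2 ∈ C ∧ p.1 ≠ p.2 ∧ ⟪p.1, p.2⟫ = (-2 / 3 : ℝ)}.ncard = 30 ∧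
    {p : EuclideanSpace ℝ (Fin 4) × EuclideanSpace ℝ (Fin 4) |
      p.1 ∈ C ∧ p.2 ∈ C ∧ p.1 ≠ p.2 ∧ ⟪p.1, p.2⟫ = (1 / 6 : ℝ)}.ncard = 60 := by
  classical
  have hfc : Fintype.card {c // c ∈ C} = 10 := by
    rw [Fintype.card_coe, hcard]
  let e : {c // c ∈ C} ≃ Fin 10 := Fintype.equivFinOfCardEq hfc
  set x : Fin 10 → EuclideanSpace ℝ (Fin 4) := fun i => ((e.symm i : {c // c ∈ C}) : _)
    with hxdef
  have hxmem : ∀ i, x i ∈ C := fun i => (e.symm i).2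
  have hxinj : Function.Injective x := fun i j h =>
    e.symm.injective (Subtype.coe_injective h)
  have hsurj : ∀ c ∈ C, ∃ i, x i = c := fun c hc => ⟨e ⟨c, hc⟩, by simp [hxdef]⟩
  have hx1 : ∀ i, ‖x i‖ = 1 := fun i => hunit _ (hxmem i)
  have hxt : ∀ i j, i ≠ j → ⟪x i, x j⟫ ≤ (1/6 : ℝ) := fun i j h =>
    hinner _ (hxmem i) _ (hxmem j) (fun hcc => h (hxinj hcc))
  have key : ∀ (t : ℝ) (n : ℕ),
      ((univ : Finset (Fin 10 × Fin 10)).filter fun q =>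
        q.1 ≠ q.2 ∧ ⟪x q.1, x q.2⟫ = t).card = n →
      {p : EuclideanSpace ℝ (Fin 4) × EuclideanSpace ℝ (Fin 4) |
        p.1 ∈ C ∧ p.2 ∈ C ∧ p.1 ≠ p.2 ∧ ⟪p.1, p.2⟫ = t}.ncard = n := by
    intro t n hn
    have hset : {p : EuclideanSpace ℝ (Fin 4) × EuclideanSpace ℝ (Fin 4) |
        p.1 ∈ C ∧ p.2 ∈ C ∧ p.1 ≠ p.2 ∧ ⟪p.1, p.2⟫ = t}
        = ↑((C ×ˢ C).filter fun p => p.1 ≠ p.2 ∧ ⟪p.1, p.2⟫ = t) := by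
      ext p
      simp only [Set.mem_setOf_eq, Finset.coe_filter, Finset.mem_product, Set.mem_setOf_eq]
      tauto
    rw [hset, Set.ncard_coe_finset, ← hn]
    symm
    refine Finset.card_bij (fun q _ => (x q.1, x q.2)) ?_ ?_ ?_
    · intro q hq
      simp only [Finset.mem_filter, Finset.mem_univ, true_and] at hq
      simp only [Finset.mem_filter, Finset.mem_product]
      exact ⟨⟨hxmem q.1, hxmem q.2⟩, fun h => hq.1 (hxinj h), hq.2⟩
    · intro a ha b hb hab
      rw [Prod.ext_iff] at hab ⊢
      exact ⟨hxinj hab.1, hxinj hab.2⟩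
    · intro p hp
      rw [Finset.mem_filter, Finset.mem_product] at hp
      obtain ⟨⟨h1, h2⟩, hne, ht⟩ := hp
      obtain ⟨i, hi⟩ := hsurj p.1 h1
      obtain ⟨j, hj⟩ := hsurj p.2 h2
      refine ⟨(i, j), ?_, ?_⟩
      · simp only [Finset.mem_filter, Finset.mem_univ, true_and]
        exact ⟨fun h => hne (by rw [← hi, ← hj, show i = j from h]),
          by show ⟪x i, x j⟫ = t; rw [hi, hj]; exact ht⟩
      · exact Prod.ext hi hj
  exact ⟨key (-2/3 : ℝ) 30 (global_count_neg hx1 hxt),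
    key (1/6 : ℝ) 60 (global_count_pos hx1 hxt)⟩
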